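/- Soundness of DFS verification with caching: consider the recursive procedure that for each abstract mode computes an over-approximation R_v ⊇ Reach exactly once per uncached initial set, subtracts cached initial sets before recursing on children, and returns safe only if every computed R_v is disjoint from the unsafe set. If the procedure terminates returning safe, then for every mode s_v reachable from the initial mode and every state x reachable in mode s_v, x ∉ O_v(s_v). Formally: given a transition system on modes with per-mode reach operators Post(s_v, I) ⊆ R_v(I) (the over-approximation), if the cached fixed point is reached with all R_v ∩ O_v = ∅, then the exact reachable set avoids O_v. -/
import Mathlib


/-- Soundness of the DFS verification algorithm with caching.
`post v x` is the exact set of states reachable in mode `v` from entry state `x` within the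
time bound; `R v I` is the over-approximate reachset computed from initial set `I`
(`computeReachset`); `trans v v' z` is the set of entry states of mode `v'` generated
(through guard and reset) from a state `z` of mode `v`; `C` is the cache of processed
per-mode initial sets at the fixed point.  If the cache covers the initial set, the fixed
point has been reached (all newly generated initial sets are already cached), and every
computed over-approximate reachset is disjoint from the unsafe set, then the exact
reachable set of every mode avoids the unsafe set. -/
theorem stmt16 {X V : Type*}
    (post : V → X → Set X)
    (R : V → Set X → Set X)
    (trans : V → V → X → Set X)
    (O : V → Set X)
    (v0 : V) (Θ : Set X)
    (C : V → Set X)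
    -- `R` over-approximates the exact per-mode reachable states:
    (hover : ∀ v (I : Set X) (x : X), x ∈ I → post v x ⊆ R v I)
    -- the cache covers the initial set:
    (hinit : Θ ⊆ C v0)
    -- fixed point: initial sets generated from computed reachsets are cached:
    (hfix : ∀ v v' z, z ∈ R v (C v) → trans v v' z ⊆ C v')
    -- the algorithm returned safe: every computed reachset avoids the unsafe set:
    (hsafe : ∀ v, R v (C v) ∩ O v = ∅) :
    -- then the exact reachable set avoids the unsafe set:
    ∀ (v : V) (z : X),
      (∃ x : X, (∃ x₀ ∈ Θ,
          Relation.ReflTransGen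
            (fun p q : V × X => ∃ y ∈ post p.1 p.2, q.2 ∈ trans p.1 q.1 y)
            (v0, x₀) (v, x)) ∧ z ∈ post v x) →
      z ∉ O v := by
  rintro v z ⟨x, ⟨x₀, hx₀, hrt⟩, hz⟩ hO
  have key : ∀ p q : V × X, p.2 ∈ C p.1 →
      Relation.ReflTransGen
        (fun p q : V × X => ∃ y ∈ post p.1 p.2, q.2 ∈ trans p.1 q.1 y) p q →
      q.2 ∈ C q.1 := by
    intro p q hp h
    induction h with
    | refl => exact hp
    | tail _ hstep ih =>
      obtain ⟨y, hy, ht⟩ := hstep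
      exact hfix _ _ y (hover _ _ _ ih hy) ht
  have hxC : x ∈ C v := key (v0, x₀) (v, x) (hinit hx₀) hrt
  have : z ∈ R v (C v) := hover v (C v) x hxC hz
  have := hsafe v
  rw [Set.eq_empty_iff_forall_notMem] at this
  exact this z ⟨‹z ∈ R v (C v)›, hO⟩
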